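/- Let (M, μ) be a measure space and let Ω : M × M → ℂ satisfy propagator conditions (1), (3) and (4): Ω(x,x) = 1 for all x; Ω(x,y) = conj(Ω(y,x)) for all x, y; and for all x, y the function z ↦ Ω(x,z)Ω(z,y) is μ-integrable with ∫_M Ω(x,z)Ω(z,y) dμ(z) = Ω(x,y). Then |Ω(x,y)| ≤ 1 for all x, y ∈ M. -/

import Mathlib

open MeasureTheory

/-- A kernel satisfying the propagator conditions (1), (3), (4) is
bounded by `1` in absolute value. -/
theorem propagator_abs_le_one
    {M : Type*} [MeasurableSpace M] (μ : Measure M)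
    (Ω : M → M → ℂ)
    (h1 : ∀ x, Ω x x = 1)
    (h3 : ∀ x y, Ω x y = (starRingEnd ℂ) (Ω y x))
    (h4int : ∀ x y, Integrable (fun z => Ω x z * Ω z y) μ)
    (h4 : ∀ x y, ∫ z, Ω x z * Ω z y ∂μ = Ω x y) :
    ∀ x y, ‖Ω x y‖ ≤ 1 := by
  have hcongr : ∀ x z, Ω x z * Ω z x = ((‖Ω x z‖ ^ 2 : ℝ) : ℂ) := by
    intro x z
    rw [h3 z x, Complex.mul_conj']
    push_cast
    ring
  -- key computation: for each x, ∫ ‖Ω x z‖² = 1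
  have key : ∀ x, ∫ z, ‖Ω x z‖ ^ 2 ∂μ = 1 := by
    intro x
    have h : ∫ z, Ω x z * Ω z x ∂μ = ((∫ z, ‖Ω x z‖ ^ 2 ∂μ : ℝ) : ℂ) := by
      simp_rw [hcongr x]
      exact integral_ofReal
    rw [h4 x x, h1 x] at h
    exact_mod_cast h.symm
  -- L² membership of z ↦ ‖Ω x z‖
  have hmem : ∀ x, MemLp (fun z => ‖Ω x z‖) 2 μ := by
    intro x
    have hint : Integrable (fun z => ‖Ω x z‖ ^ 2) μ := by
      have h := (h4int x x).norm
      simp_rw [hcongr x, Complex.norm_real, Real.norm_of_nonneg (sq_nonneg _)] at h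
      exact h
    have hmeas : AEStronglyMeasurable (fun z => ‖Ω x z‖) μ := by
      have h2 : AEStronglyMeasurable (fun z => ‖Ω x z‖ ^ 2) μ := hint.aestronglyMeasurable
      have h3' : AEStronglyMeasurable (fun z => Real.sqrt (‖Ω x z‖ ^ 2)) μ :=
        Real.continuous_sqrt.comp_aestronglyMeasurable h2
      simp_rw [Real.sqrt_sq (norm_nonneg _)] at h3'
      exact h3'
    exact (memLp_two_iff_integrable_sq hmeas).2 hint
  intro x y
  have hflip : (fun z => ‖Ω z y‖) = fun z => ‖Ω y z‖ :=
    funext fun z => by rw [h3 z y, RCLike.norm_conj]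
  have hrpow : ∀ r : ℝ, 0 ≤ r → r ^ (2:ℝ) = r ^ 2 := fun r hr => by
    rw [← Real.rpow_natCast r 2]; norm_num
  have hconj : Real.HolderConjugate 2 2 := ⟨by norm_num, by norm_num, by norm_num⟩
  calc ‖Ω x y‖ = ‖∫ z, Ω x z * Ω z y ∂μ‖ := by rw [h4]
    _ ≤ ∫ z, ‖Ω x z * Ω z y‖ ∂μ := norm_integral_le_integral_norm _
    _ = ∫ z, ‖Ω x z‖ * ‖Ω z y‖ ∂μ := by simp_rw [norm_mul]
    _ ≤ (∫ z, ‖Ω x z‖ ^ (2:ℝ) ∂μ) ^ (1/(2:ℝ)) * (∫ z, ‖Ω z y‖ ^ (2:ℝ) ∂μ) ^ (1/(2:ℝ)) := by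
        have hg : MemLp (fun z => ‖Ω z y‖) 2 μ := hflip ▸ hmem y
        have h2 : ENNReal.ofReal (2:ℝ) = 2 := by norm_num
        exact integral_mul_le_Lp_mul_Lq_of_nonneg hconj
          (Filter.Eventually.of_forall fun z => norm_nonneg (Ω x z))
          (Filter.Eventually.of_forall fun z => norm_nonneg (Ω z y))
          (h2 ▸ hmem x) (h2 ▸ hg)
    _ = 1 := by
        have e1 : ∫ z, ‖Ω x z‖ ^ (2:ℝ) ∂μ = 1 := by
          simp_rw [hrpow _ (norm_nonneg _)]; exact key x
        have e2 : ∫ z, ‖Ω z y‖ ^ (2:ℝ) ∂μ = 1 := by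
          simp_rw [hrpow _ (norm_nonneg _), show ∀ z, ‖Ω z y‖ = ‖Ω y z‖ from
            fun z => by rw [h3 z y, RCLike.norm_conj]]
          exact key y
        rw [e1, e2]; norm_num
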